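/- If α > β are ordinals, ℵ_α is regular (or more generally cf(ℵ_α) > ℵ_β), and ℵ_γ ^ ℵ_β < ℵ_α for all γ < α, then ℵ_α ^ ℵ_β = ℵ_α. -/

import Mathlib

open Cardinal Ordinal Set

theorem aleph_power_eq_self (α β : Ordinal) (hβα : β < α)
    (hcof : Cardinal.aleph β < (Cardinal.aleph α).ord.cof)
    (hlt : ∀ γ < α, Cardinal.aleph γ ^ Cardinal.aleph β < Cardinal.aleph α) :
    Cardinal.aleph α ^ Cardinal.aleph β = Cardinal.aleph α := by
  set κ := Cardinal.aleph α with hκ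
  set μ := Cardinal.aleph β with hμ
  have hκinf : ℵ₀ ≤ κ := aleph0_le_aleph α
  have hαpos : 0 < α := (zero_le : (0 : Ordinal) ≤ β).trans_lt hβα
  -- every cardinal < κ has power < κ
  have key : ∀ c : Cardinal, c < κ → c ^ μ < κ := by
    intro c hc
    rcases lt_or_ge c ℵ₀ with h | h
    · calc c ^ μ ≤ ℵ₀ ^ μ := power_le_power_right h.le
        _ = Cardinal.aleph 0 ^ μ := by rw [aleph_zero]
        _ < κ := hlt 0 hαpos
    · obtain ⟨γ, rfl⟩ := Cardinal.mem_range_aleph_iff.mpr h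
      exact hlt γ (aleph_lt_aleph.mp hc)
  -- set up types
  let A := κ.ord.ToType
  haveI : IsWellOrder A (· < ·) := isWellOrder_lt
  let B := μ.out
  have hA : #A = κ := by rw [mk_toType, card_ord]
  have hB : #B = μ := mk_out μ
  have htype : type ((· < ·) : A → A → Prop) = κ.ord := type_toType κ.ord
  -- every function B → A is bounded
  have bounded : ∀ f : B → A, ∃ x : A, ∀ i : B, f i < x := by
    intro f
    have hr : #(Set.range f) < Ordinal.cof (type ((· < ·) : A → A → Prop)) := by
      rw [htype]
      exact (mk_range_le.trans_eq hB).trans_lt hcof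
    obtain ⟨x, hx⟩ : ∃ x, ∀ b ∈ Set.range f, b < x := by
      by_contra hc; push_neg at hc
      exact hr.not_ge ((Ordinal.cof_type A).trans_le (Order.cof_le hc))
    exact ⟨x, fun i => hx (f i) (Set.mem_range_self i)⟩
  -- injection from (B → A) into a sigma type
  have hinj : #(B → A) ≤ #(Σ x : A, (B → {y : A // y < x})) := by
    choose bd hbd using bounded
    refine mk_le_of_injective (f := fun f => ⟨bd f, fun i => ⟨f i, hbd f i⟩⟩) ?_
    intro f g h
    funext i
    exact congrArg (fun p : Σ x : A, (B → {y : A // y < x}) => (p.2 i).1) h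
  -- each fiber is small
  have fiber_lt : ∀ x : A, #{y : A // y < x} < κ := by
    intro x
    rw [← Ordinal.card_typein (r := ((· < ·) : A → A → Prop)) x, ← Cardinal.lt_ord]
    have h := typein_lt_type ((· < ·) : A → A → Prop) x
    rwa [htype] at h
  -- put it together
  apply le_antisymm
  · calc κ ^ μ = #(B → A) := by rw [← hA, ← hB, power_def]
      _ ≤ #(Σ x : A, (B → {y : A // y < x})) := hinj
      _ = Cardinal.sum fun x : A => #{y : A // y < x} ^ μ := by
          rw [mk_sigma]; congr 1; funext x; rw [← hB, power_def]
      _ ≤ Cardinal.sum fun _ : A => κ :=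
          Cardinal.sum_le_sum _ _ fun x => (key _ (fiber_lt x)).le
      _ = #A * κ := Cardinal.sum_const' A κ
      _ = κ := by rw [hA, Cardinal.mul_eq_self hκinf]
  · conv_lhs => rw [← power_one κ]
    exact power_le_power_left (aleph0_pos.trans_le hκinf).ne' (one_le_aleph0.trans (aleph0_le_aleph β))
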